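/- Let T > 0, let A : ℝ → ℍ^{n×n} be continuous with A(t+T) = A(t) for all t, and let M be a fundamental matrix of ẋ = A(t)x. Then M(t+T) = M(t)·M(0)⁻¹·M(T) for all t ∈ ℝ. -/

import Mathlib

open Matrix Polynomial
open scoped Quaternion

noncomputable section

/-- The two complex components of a quaternion: `q = c1 q + (c2 q) * j`,
identifying `ℂ` with the real span of `1` and `i` in `ℍ`. -/
def Quaternion.c1 (q : ℍ[ℝ]) : ℂ := ⟨q.re, q.imI⟩

def Quaternion.c2 (q : ℍ[ℝ]) : ℂ := ⟨q.imJ, q.imK⟩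

/-- The embedding of `ℂ` into `ℍ` as the real span of `1` and `i`. -/
def Complex.toQuat (z : ℂ) : ℍ[ℝ] := ⟨z.re, z.im, 0, 0⟩

/-- The complex adjoint matrix `χ_A` of a quaternion matrix `A = A₁ + A₂·j`:
the block matrix `[[A₁, A₂], [-conj A₂, conj A₁]]`. -/
def chiMat {n : ℕ} (A : Matrix (Fin n) (Fin n) ℍ[ℝ]) :
    Matrix (Fin n ⊕ Fin n) (Fin n ⊕ Fin n) ℂ :=
  Matrix.fromBlocks (A.map Quaternion.c1) (A.map Quaternion.c2)
    ((-(A.map Quaternion.c2)).map (starRingEnd ℂ)) ((A.map Quaternion.c1).map (starRingEnd ℂ))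

/-- `ρ` is a standard eigenvalue of the quaternion matrix `A`: an eigenvalue of the
complex adjoint matrix `χ_A` with nonnegative imaginary part. -/
def IsStdEigenvalue {n : ℕ} (A : Matrix (Fin n) (Fin n) ℍ[ℝ]) (ρ : ℂ) : Prop :=
  (chiMat A).charpoly.IsRoot ρ ∧ 0 ≤ ρ.im

/-- `s` is the multiset of standard eigenvalues of `A` counted with multiplicity:
it has `n` elements, all with nonnegative imaginary part, and the characteristic
polynomial of `χ_A` is `∏_{z ∈ s} (X - z)·(X - conj z)`. -/
def IsStdEigs {n : ℕ} (A : Matrix (Fin n) (Fin n) ℍ[ℝ]) (s : Multiset ℂ) : Prop :=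
  Multiset.card s = n ∧ (∀ z ∈ s, 0 ≤ z.im) ∧
    (chiMat A).charpoly =
      (s.map (fun z => (X - C z) * (X - C (starRingEnd ℂ z)))).prod

/-- `x : ℝ → ℍ^n` is a solution of the linear quaternionic system `ẋ = A(t)x`. -/
def IsSol {n : ℕ} (A : ℝ → Matrix (Fin n) (Fin n) ℍ[ℝ]) (x : ℝ → Fin n → ℍ[ℝ]) : Prop :=
  ∀ t : ℝ, HasDerivAt x ((A t).mulVec (x t)) t

/-- The norm `‖x‖ = Σ_k |x_k|` on `ℍ^n`. -/
def vecNorm {n : ℕ} (x : Fin n → ℍ[ℝ]) : ℝ := ∑ k, ‖x k‖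

/-- The norm `‖A‖ = Σ_{i,j} |a_{ij}|` on `ℍ^{n×n}`. -/
def matNorm {n : ℕ} (A : Matrix (Fin n) (Fin n) ℍ[ℝ]) : ℝ := ∑ i, ∑ j, ‖A i j‖

/-- Stability (in the sense of Lyapunov) of the system `ẋ = A(t)x` at `t₀`. -/
def StableAt {n : ℕ} (A : ℝ → Matrix (Fin n) (Fin n) ℍ[ℝ]) (t₀ : ℝ) : Prop :=
  ∀ ε > (0:ℝ), ∃ δ > (0:ℝ), ∀ x : ℝ → Fin n → ℍ[ℝ], IsSol A x →
    vecNorm (x t₀) < δ → ∀ t ≥ t₀, vecNorm (x t) < ε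

/-- Asymptotic stability of the system `ẋ = A(t)x` at `t₀`. -/
def AsympStableAt {n : ℕ} (A : ℝ → Matrix (Fin n) (Fin n) ℍ[ℝ]) (t₀ : ℝ) : Prop :=
  StableAt A t₀ ∧ ∃ δ > (0:ℝ), ∀ x : ℝ → Fin n → ℍ[ℝ], IsSol A x →
    vecNorm (x t₀) < δ →
      Filter.Tendsto (fun t => vecNorm (x t)) Filter.atTop (nhds 0)

/-- `M` is a fundamental matrix of `ẋ = A(t)x`: entrywise `M'(t) = A(t)·M(t)`
and `M(t)` is invertible for every `t`. -/
def IsFundamental {n : ℕ} (A M : ℝ → Matrix (Fin n) (Fin n) ℍ[ℝ]) : Prop :=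
  (∀ (t : ℝ) (i j : Fin n), HasDerivAt (fun s => M s i j) ((A t * M t) i j) t) ∧
    ∀ t : ℝ, IsUnit (M t)

/-- for a `T`-periodic system, `M(t+T) = M(t)·M(0)⁻¹·M(T)`. -/
theorem stmt8 {n : ℕ} (T : ℝ) (hT : 0 < T) (A M : ℝ → Matrix (Fin n) (Fin n) ℍ[ℝ])
    (hA : Continuous A) (hAper : ∀ t, A (t + T) = A t) (hM : IsFundamental A M) :
    ∀ t : ℝ, M (t + T) = M t * Ring.inverse (M 0) * M T := by
  set E := Fin n → Fin n → ℍ[ℝ] with hE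
  set C : Matrix (Fin n) (Fin n) ℍ[ℝ] := Ring.inverse (M 0) * M T with hC
  set v : ℝ → E → E := fun t x i j => ∑ k, A t i k * x k j with hv
  -- a global Lipschitz bound
  set φ : ℝ → ℝ := fun t => ∑ i, ∑ j, ‖A t i j‖ with hφ
  have hφc : Continuous φ := by
    apply continuous_finset_sum _ fun i _ => continuous_finset_sum _ fun j _ => ?_
    exact (hA.matrix_elem i j).norm
  have hφper : Function.Periodic φ T := fun t => by simp only [hφ, hAper t]
  obtain ⟨s₀, hs₀, hs₀max⟩ := (isCompact_Icc (a := (0:ℝ)) (b := T)).exists_isMaxOn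
    (Set.nonempty_Icc.mpr hT.le) hφc.continuousOn
  set K : NNReal := (φ s₀).toNNReal with hK
  have hrow : ∀ t (i : Fin n), ∑ k, ‖A t i k‖ ≤ (K : ℝ) := by
    intro t i
    have h1 : ∑ k, ‖A t i k‖ ≤ φ t := by
      refine Finset.single_le_sum (f := fun i => ∑ j, ‖A t i j‖) ?_ (Finset.mem_univ i)
      intro k _
      exact Finset.sum_nonneg fun j _ => norm_nonneg _
    have h2 : φ t ≤ φ s₀ := by
      obtain ⟨y, hy, hxy⟩ := hφper.exists_mem_Ico₀ hT t
      rw [hxy]; exact hs₀max ⟨hy.1, hy.2.le⟩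
    calc ∑ k, ‖A t i k‖ ≤ φ s₀ := h1.trans h2
      _ ≤ (K : ℝ) := by rw [hK, Real.coe_toNNReal']; exact le_max_left _ _
  have hlip : ∀ t, LipschitzWith K (v t) := by
    intro t
    refine LipschitzWith.of_dist_le_mul fun x y => ?_
    have hd : (0:ℝ) ≤ (K : ℝ) * dist x y := by positivity
    rw [dist_pi_le_iff hd]
    intro i
    rw [dist_pi_le_iff hd]
    intro j
    have hentry : ∀ k : Fin n, dist (x k j) (y k j) ≤ dist x y := fun k =>
      (dist_le_pi_dist (x k) (y k) j).trans (dist_le_pi_dist x y k)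
    calc dist (v t x i j) (v t y i j)
        = ‖∑ k, (A t i k * x k j - A t i k * y k j)‖ := by
          rw [dist_eq_norm, ← Finset.sum_sub_distrib]
      _ = ‖∑ k, A t i k * (x k j - y k j)‖ := by
          congr 1
          exact Finset.sum_congr rfl fun k _ => (mul_sub _ _ _).symm
      _ ≤ ∑ k, ‖A t i k * (x k j - y k j)‖ := norm_sum_le _ _
      _ ≤ ∑ k, ‖A t i k‖ * dist x y := by
          refine Finset.sum_le_sum fun k _ => ?_
          rw [norm_mul]
          exact mul_le_mul_of_nonneg_left (by rw [← dist_eq_norm]; exact hentry k)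
            (norm_nonneg _)
      _ = (∑ k, ‖A t i k‖) * dist x y := by rw [Finset.sum_mul]
      _ ≤ (K : ℝ) * dist x y := mul_le_mul_of_nonneg_right (hrow t i) dist_nonneg
  -- the two solutions
  set f : ℝ → E := fun s i j => M (s + T) i j with hf
  set g : ℝ → E := fun s i j => (M s * C) i j with hg
  have hf' : ∀ t, HasDerivAt f (v t (f t)) t := by
    intro t
    rw [hasDerivAt_pi]
    intro i
    rw [hasDerivAt_pi]
    intro j
    have h2 : HasDerivAt (fun s : ℝ => M (s + T) i j) ((A t * M (t + T)) i j) t := by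
      have := HasDerivAt.comp_add_const t T (hM.1 (t + T) i j)
      rwa [hAper t] at this
    have he : v t (f t) i j = (A t * M (t + T)) i j := by
      show ∑ k, A t i k * M (t + T) k j = _
      rw [Matrix.mul_apply]
    rw [he]
    exact h2
  have hg' : ∀ t, HasDerivAt g (v t (g t)) t := by
    intro t
    rw [hasDerivAt_pi]
    intro i
    rw [hasDerivAt_pi]
    intro j
    have h2 : HasDerivAt (fun s => ∑ k, M s i k * C k j)
        (∑ k, (A t * M t) i k * C k j) t :=
      HasDerivAt.fun_sum fun k _ => (hM.1 t i k).mul_const (C k j)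
    have he : v t (g t) i j = ∑ k, (A t * M t) i k * C k j := by
      show ∑ k, A t i k * (M t * C) k j = _
      simp only [Matrix.mul_apply, Finset.sum_mul, Finset.mul_sum, mul_assoc]
      rw [Finset.sum_comm]
    rw [he]
    have h3 : (fun s => g s i j) = fun s => ∑ k, M s i k * C k j := by
      funext s
      show (M s * C) i j = _
      rw [Matrix.mul_apply]
    show HasDerivAt (fun s => g s i j) _ t
    rw [h3]
    exact h2
  have h0 : f 0 = g 0 := by
    funext i j
    rw [hf, hg]
    simp only [zero_add, hC, ← Matrix.mul_assoc, Ring.mul_inverse_cancel _ (hM.2 0),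
      Matrix.one_mul]
  intro t
  have key : f t = g t := by
    have hmem : (0:ℝ) ∈ Set.Ioo (-(|t| + 1)) (|t| + 1) := by
      have h1 := abs_nonneg t
      exact Set.mem_Ioo.mpr ⟨by linarith, by linarith⟩
    have := ODE_solution_unique_of_mem_Icc (s := fun _ => Set.univ)
      (fun t _ => (hlip t).lipschitzOnWith) hmem
      (fun s _ => (hf' s).continuousAt.continuousWithinAt)
      (fun s _ => hf' s) (fun _ _ => Set.mem_univ _)
      (fun s _ => (hg' s).continuousAt.continuousWithinAt)
      (fun s _ => hg' s) (fun _ _ => Set.mem_univ _) h0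
    have h2 := neg_abs_le t
    have h3 := le_abs_self t
    exact this ⟨by linarith, by linarith⟩
  rw [Matrix.mul_assoc]
  exact key
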